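/- Let n ≥ 3 and let κ = (κ_1,…,κ_n) ∈ K_2 be ordered decreasingly, κ_1 ≥ ⋯ ≥ κ_n, and suppose κ_n < 0. Write κ' = (κ|n) = (κ_1,…,κ_{n−1}). Then S_1(κ') > 0, 0 < S_2(κ') − S_2(κ) < S_2(κ'), and S_1(κ)/(−κ_n) = −1 + S_1(κ')²/(S_2(κ') − S_2(κ)). -/
import Mathlib


open Finset

lemma myesymm_cons (a : ℝ) (s : Multiset ℝ) (k : ℕ) :
    (a ::ₘ s).esymm (k+1) = s.esymm (k+1) + a * s.esymm k := by
  rw [Multiset.esymm, Multiset.powersetCard_cons, Multiset.map_add, Multiset.sum_add]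
  congr 1
  rw [Multiset.map_map, Multiset.esymm]
  simp only [Function.comp, Multiset.prod_cons]
  rw [Multiset.sum_map_mul_left]

/-- The `k`-th elementary symmetric polynomial of `x ∈ ℝ^m`. -/
noncomputable def esymm {m : ℕ} (k : ℕ) (x : Fin m → ℝ) : ℝ :=
  ∑ t ∈ Finset.powersetCard k (Finset.univ : Finset (Fin m)), ∏ i ∈ t, x i

lemma esymm_eq_mset {m : ℕ} (k : ℕ) (x : Fin m → ℝ) :
    esymm k x = ((Finset.univ : Finset (Fin m)).val.map x).esymm k :=
  (Finset.esymm_map_val x Finset.univ k).symm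

lemma esymm_zero' {m : ℕ} (x : Fin m → ℝ) : esymm 0 x = 1 := by
  simp [esymm]

lemma mset_decomp (m : ℕ) (κ : Fin (m+1) → ℝ) (κ' : Fin m → ℝ)
    (hκ' : ∀ j : Fin m, κ' j = κ (Fin.castSucc j)) :
    (Finset.univ : Finset (Fin (m+1))).val.map κ
      = κ (Fin.last m) ::ₘ (Finset.univ : Finset (Fin m)).val.map κ' := by
  rw [Fin.univ_val_map, Fin.univ_val_map, List.ofFn_succ' κ]
  have : List.ofFn κ' = List.ofFn (κ ∘ Fin.castSucc) := by
    congr 1; funext j; exact hκ' j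
  rw [this]
  rw [List.concat_eq_append, ← Multiset.coe_add, Multiset.coe_singleton, add_comm,
    Multiset.singleton_add]
  rfl

lemma esymm_rec {m : ℕ} (k : ℕ) (κ : Fin (m+1) → ℝ) (κ' : Fin m → ℝ)
    (hκ' : ∀ j : Fin m, κ' j = κ (Fin.castSucc j)) :
    esymm (k+1) κ = esymm (k+1) κ' + κ (Fin.last m) * esymm k κ' := by
  rw [esymm_eq_mset, esymm_eq_mset, esymm_eq_mset, mset_decomp m κ κ' hκ', myesymm_cons]

theorem stmt_8 (n : ℕ) (hn : 3 ≤ n) (κ : Fin n → ℝ)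
    (hord : ∀ i j : Fin n, i ≤ j → κ j ≤ κ i)
    (h1 : 0 < esymm 1 κ) (h2 : 0 < esymm 2 κ)
    (hneg : κ ⟨n - 1, by omega⟩ < 0)
    (κ' : Fin (n - 1) → ℝ) (hκ' : ∀ j : Fin (n - 1), κ' j = κ (Fin.castLE (Nat.sub_le n 1) j)) :
    0 < esymm 1 κ' ∧
    0 < esymm 2 κ' - esymm 2 κ ∧
    esymm 2 κ' - esymm 2 κ < esymm 2 κ' ∧
    esymm 1 κ / (-κ ⟨n - 1, by omega⟩)
      = -1 + (esymm 1 κ') ^ 2 / (esymm 2 κ' - esymm 2 κ) := by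
  obtain ⟨m, rfl⟩ : ∃ m, n = m + 1 := ⟨n - 1, by omega⟩
  have hc : ∀ j : Fin m, κ' j = κ (Fin.castSucc j) := fun j => hκ' j
  have hlam : κ (Fin.last m) < 0 := hneg
  set lam := κ (Fin.last m) with hl
  set A := esymm 1 κ' with hA
  have e1 : esymm 1 κ = A + lam := by
    have := esymm_rec 0 κ κ' hc
    rw [esymm_zero'] at this
    rw [this]; ring
  have e2 : esymm 2 κ = esymm 2 κ' + lam * A := esymm_rec 1 κ κ' hc
  have hApos : 0 < A := by nlinarith [h1, e1]
  have hdiff : esymm 2 κ' - esymm 2 κ = -(lam * A) := by rw [e2]; ring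
  refine ⟨hApos, ?_, ?_, ?_⟩
  · rw [hdiff]; nlinarith
  · linarith
  · show esymm 1 κ / (-lam) = -1 + A ^ 2 / (esymm 2 κ' - esymm 2 κ)
    rw [e1, hdiff]
    have hlam' : lam ≠ 0 := ne_of_lt hlam
    have hA' : A ≠ 0 := ne_of_gt hApos
    field_simp
    ring
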